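/- Let A = !![a, b; c, d] be a real 2×2 matrix. Then the function T_A is differentiable with T_A'(θ) = −2·(R_A(θ) − m_R) for every θ ∈ ℝ. In particular, if T_A(θ*) = 0 and R_A(θ*) > m_R then T_A'(θ*) < 0 (so θ* is an attracting equilibrium of the angular dynamics θ' = T_A(θ)), and if T_A(θ*) = 0 and R_A(θ*) < m_R then T_A'(θ*) > 0 (so θ* is a repelling equilibrium). -/

import Mathlib

open Real Matrix

/-- The radial component `R_A(θ) = ⟨A·v(θ), v(θ)⟩` with `v(θ) = (cos θ, sin θ)`. -/
noncomputable def Rcomp (A : Matrix (Fin 2) (Fin 2) ℝ) (θ : ℝ) : ℝ :=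
  A.mulVec ![Real.cos θ, Real.sin θ] ⬝ᵥ ![Real.cos θ, Real.sin θ]

/-- The tangential component `T_A(θ) = ⟨A·v(θ), v⊥(θ)⟩` with `v⊥(θ) = (−sin θ, cos θ)`. -/
noncomputable def Tcomp (A : Matrix (Fin 2) (Fin 2) ℝ) (θ : ℝ) : ℝ :=
  A.mulVec ![Real.cos θ, Real.sin θ] ⬝ᵥ ![-Real.sin θ, Real.cos θ]

theorem stmt_6 (a b c d : ℝ) (A : Matrix (Fin 2) (Fin 2) ℝ) (hA : A = !![a, b; c, d])
    (mR : ℝ) (hmR : mR = (a + d) / 2) :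
    (∀ θ : ℝ, HasDerivAt (Tcomp A) (-2 * (Rcomp A θ - mR)) θ) ∧
    (∀ θstar : ℝ, Tcomp A θstar = 0 → Rcomp A θstar > mR → deriv (Tcomp A) θstar < 0) ∧
    (∀ θstar : ℝ, Tcomp A θstar = 0 → Rcomp A θstar < mR → deriv (Tcomp A) θstar > 0) := by
  subst hA hmR
  have key : ∀ θ : ℝ, HasDerivAt (Tcomp !![a, b; c, d])
      (-2 * (Rcomp !![a, b; c, d] θ - (a + d) / 2)) θ := by
    intro θ
    have h : Tcomp !![a, b; c, d] = fun s : ℝ =>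
        (a * Real.cos s + b * Real.sin s) * (-Real.sin s)
          + (c * Real.cos s + d * Real.sin s) * Real.cos s := by
      funext s
      simp [Tcomp, mulVec, dotProduct, Fin.sum_univ_two]
    rw [h]
    have hc := Real.hasDerivAt_cos θ
    have hs := Real.hasDerivAt_sin θ
    have H := (((hc.const_mul a).add (hs.const_mul b)).mul hs.neg).add
      (((hc.const_mul c).add (hs.const_mul d)).mul hc)
    refine H.congr_deriv ?_
    have hp := Real.sin_sq_add_cos_sq θ
    simp [Rcomp, mulVec, dotProduct, Fin.sum_univ_two]
    linear_combination (a + d) * hp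
  refine ⟨key, ?_, ?_⟩
  · intro θ _ hR
    rw [(key θ).deriv]
    nlinarith
  · intro θ _ hR
    rw [(key θ).deriv]
    nlinarith
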